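/- arXiv:2208.14373 — 2 statements merged into one kernel-verified Lean document; each statement's English description precedes it below -/
import Mathlib

section
/- Explicit formula for the transformation matrix, general case: Let α', α > 0 and u', u ∈ ℝ with α ≠ α' and u ≠ u', and set a := α/α', b := (u−u')/α', K_{n,m} := 2^{(m−n)/2}·(m!)^{−1/2}·(n!)^{1/2}. Then for all n, m ∈ ℕ with n ≥ m, ℙ_{n,m} = K_{n,m}·a^{−(m+1)}·Σ_{k=m, k−m even}^{n} [1/((n−k)!·((k−m)/2)!)]·(−2b/a)^{n−k}·(1/a² − 1)^{(k−m)/2}, where the sum ranges over integers k with m ≤ k ≤ n and k−m even. -/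
open MeasureTheory Real Finset

/-- Physicists' Hermite polynomials: `H 0 x = 1`, `H 1 x = 2x`,
`H (n+1) x = 2x · H n x − 2n · H (n−1) x`. -/
noncomputable def physHermite : ℕ → ℝ → ℝ
  | 0 => fun _ => 1
  | 1 => fun x => 2 * x
  | (n + 2) => fun x => 2 * x * physHermite (n + 1) x - 2 * ((n : ℝ) + 1) * physHermite n x

/-- Asymmetrically weighted Hermite function
`ψ_n^{α,u}(v) = (π·2^n·n!)^{-1/2} · H_n((v−u)/α) · exp(−((v−u)/α)²)`. -/
noncomputable def awHermite (α u : ℝ) (n : ℕ) (v : ℝ) : ℝ :=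
  (Real.sqrt (Real.pi * 2 ^ n * (n.factorial : ℝ)))⁻¹ * physHermite n ((v - u) / α) *
    Real.exp (-((v - u) / α) ^ 2)

/-- The weight `ω(v) = √π · α⁻¹ · exp(((v−u)/α)²)`. -/
noncomputable def hermiteWeight (α u : ℝ) (v : ℝ) : ℝ :=
  Real.sqrt Real.pi * α⁻¹ * Real.exp (((v - u) / α) ^ 2)

/-- Transformation matrix entries `ℙ_{n,m} = ∫ ψ_m^{α',u'}(v) · ψ_n^{α,u}(v) · ω(v) dv`. -/
noncomputable def transferMatrix (α' u' α u : ℝ) (n m : ℕ) : ℝ :=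
  ∫ v : ℝ, awHermite α' u' m v * awHermite α u n v * hermiteWeight α u v

/-- The coefficient `K_{n,m} = 2^{(m−n)/2} · (m!)^{−1/2} · (n!)^{1/2}`. -/
noncomputable def Kcoef (n m : ℕ) : ℝ :=
  (2 : ℝ) ^ (((m : ℝ) - (n : ℝ)) / 2) * (Real.sqrt (m.factorial : ℝ))⁻¹ *
    Real.sqrt (n.factorial : ℝ)

open Polynomial Filter

lemma physHermite_succ (n : ℕ) (x : ℝ) :
    physHermite (n + 1) x = 2 * x * physHermite n x - 2 * (n : ℝ) * physHermite (n - 1) x := by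
  cases n with
  | zero => simp [physHermite]
  | succ k => simp only [physHermite]; push_cast; ring

noncomputable def physPoly : ℕ → Polynomial ℝ
  | 0 => 1
  | 1 => Polynomial.C 2 * Polynomial.X
  | (n + 2) => Polynomial.C 2 * Polynomial.X * physPoly (n + 1)
      - Polynomial.C (2 * ((n : ℝ) + 1)) * physPoly n

lemma physPoly_eval : ∀ (n : ℕ) (x : ℝ), (physPoly n).eval x = physHermite n x
  | 0, x => by simp [physPoly, physHermite]
  | 1, x => by simp [physPoly, physHermite]
  | (n + 2), x => by
      simp [physPoly, physHermite, physPoly_eval (n + 1) x, physPoly_eval n x]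

lemma hasDerivAt_physHermite : ∀ (n : ℕ) (x : ℝ),
    HasDerivAt (physHermite n) (2 * (n : ℝ) * physHermite (n - 1) x) x
  | 0, x => by
      have : HasDerivAt (fun _ : ℝ => (1 : ℝ)) 0 x := hasDerivAt_const x 1
      simpa [physHermite] using this
  | 1, x => by
      have : HasDerivAt (fun y : ℝ => 2 * y) 2 x := by
        simpa using (hasDerivAt_id x).const_mul (2 : ℝ)
      have h2 : (2 : ℝ) = 2 * ((1 : ℕ) : ℝ) * physHermite 0 x := by simp [physHermite]
      simpa [physHermite, ← h2] using this
  | (n + 2), x => by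
      have h1 := hasDerivAt_physHermite (n + 1) x
      have h0 := hasDerivAt_physHermite n x
      have hx : HasDerivAt (fun y : ℝ => 2 * y) 2 x := by
        simpa using (hasDerivAt_id x).const_mul (2 : ℝ)
      have h := ((hx.mul h1).sub (h0.const_mul (2 * ((n : ℝ) + 1))))
      have hfun : physHermite (n + 2)
          = fun y => (2 * y) * physHermite (n + 1) y - 2 * ((n : ℝ) + 1) * physHermite n y := by
        funext y; simp [physHermite]
      rw [hfun]
      refine h.congr_deriv ?_
      have := physHermite_succ n x
      push_cast [physHermite_succ (n + 1) x, physHermite_succ n x]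
      ring

lemma integrable_poly_gauss (p : Polynomial ℝ) :
    Integrable fun x : ℝ => p.eval x * Real.exp (-x ^ 2) := by
  induction p using Polynomial.induction_on' with
  | add p q hp hq =>
      have := hp.add hq
      simp only [eval_add, add_mul]
      exact this
  | monomial k c =>
      have h := integrable_rpow_mul_exp_neg_mul_sq (b := 1) one_pos
        (s := (k : ℝ)) (by exact_mod_cast neg_one_lt_zero.trans_le (Nat.cast_nonneg k))
      simp only [Real.rpow_natCast, neg_mul, one_mul] at h
      have := h.const_mul c
      simpa [eval_monomial, mul_assoc, mul_comm, mul_left_comm] using this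

lemma tendsto_poly_gauss (p : Polynomial ℝ) :
    Tendsto (fun x : ℝ => p.eval x * Real.exp (-x ^ 2)) (cocompact ℝ) (nhds 0) := by
  induction p using Polynomial.induction_on' with
  | add p q hp hq =>
      have := hp.add hq
      simpa [add_mul] using this
  | monomial k c =>
      have h := tendsto_rpow_abs_mul_exp_neg_mul_sq_cocompact (a := 1) one_pos (k : ℝ)
      simp only [neg_mul, one_mul] at h
      have h2 := h.const_mul |c|
      rw [mul_zero] at h2
      apply squeeze_zero_norm _ h2
      intro x
      simp only [eval_monomial, Real.norm_eq_abs, abs_mul, abs_pow, Real.abs_exp]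
      rw [Real.rpow_natCast]
      ring_nf
      exact le_refl _

lemma integral_deriv_zero (g g' : ℝ → ℝ) (hd : ∀ x, HasDerivAt g (g' x) x)
    (hi : Integrable g') (ht : Tendsto g (cocompact ℝ) (nhds 0)) :
    ∫ x : ℝ, g' x = 0 := by
  rw [cocompact_eq_atBot_atTop, tendsto_sup] at ht
  have h1 : Tendsto (fun T : ℝ => ∫ x in (-T)..T, g' x) atTop (nhds (∫ x : ℝ, g' x)) :=
    intervalIntegral_tendsto_integral hi tendsto_neg_atTop_atBot tendsto_id
  have h2 : ∀ T : ℝ, ∫ x in (-T)..T, g' x = g T - g (-T) := fun T =>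
    intervalIntegral.integral_eq_sub_of_hasDerivAt (fun x _ => hd x) (hi.intervalIntegrable)
  have h3 : Tendsto (fun T : ℝ => g T - g (-T)) atTop (nhds (0 - 0)) :=
    ht.2.sub (ht.1.comp tendsto_neg_atTop_atBot)
  rw [sub_zero] at h3
  exact tendsto_nhds_unique (h1.congr h2) h3

open Polynomial Filter

lemma PHH_eq (p : Polynomial ℝ) (a b : ℝ) (n : ℕ) :
    (fun w : ℝ => p.eval w * physHermite n ((w - b) / a) * Real.exp (-w ^ 2))
      = fun x : ℝ => (p * (physPoly n).comp (Polynomial.C a⁻¹ * (Polynomial.X - Polynomial.C b))).eval x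
          * Real.exp (-x ^ 2) := by
  funext w
  simp [eval_comp, physPoly_eval, inv_mul_eq_div]

lemma integrable_PHH (p : Polynomial ℝ) (a b : ℝ) (n : ℕ) :
    Integrable fun w : ℝ => p.eval w * physHermite n ((w - b) / a) * Real.exp (-w ^ 2) := by
  rw [PHH_eq]; exact integrable_poly_gauss _

lemma tendsto_PHH (p : Polynomial ℝ) (a b : ℝ) (n : ℕ) :
    Tendsto (fun w : ℝ => p.eval w * physHermite n ((w - b) / a) * Real.exp (-w ^ 2))
      (cocompact ℝ) (nhds 0) := by
  rw [PHH_eq]; exact tendsto_poly_gauss _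

lemma integrable_HH (a b : ℝ) (n m : ℕ) :
    Integrable fun w : ℝ => physHermite m w * physHermite n ((w - b) / a) * Real.exp (-w ^ 2) := by
  have := integrable_PHH (physPoly m) a b n
  simpa [physPoly_eval] using this

lemma hasDerivAt_HG (m : ℕ) (x : ℝ) :
    HasDerivAt (fun y : ℝ => physHermite m y * Real.exp (-y ^ 2))
      (-(physHermite (m + 1) x * Real.exp (-x ^ 2))) x := by
  have he : HasDerivAt (fun y : ℝ => Real.exp (-y ^ 2)) (Real.exp (-x ^ 2) * (-(2 * x))) x := by
    have h1 : HasDerivAt (fun y : ℝ => -y ^ 2) (-(2 * x)) x := by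
      exact ((hasDerivAt_pow 2 x).neg).congr_deriv (by norm_num)
    exact h1.exp
  have h := (hasDerivAt_physHermite m x).mul he
  refine h.congr_deriv ?_
  rw [physHermite_succ m x]
  ring

/-- inner derivative -/
lemma hasDerivAt_inner (a b x : ℝ) : HasDerivAt (fun w : ℝ => (w - b) / a) (1 / a) x := by
  simpa using ((hasDerivAt_id x).sub_const b).div_const a

lemma hasDerivAt_Hcomp (n : ℕ) (a b x : ℝ) :
    HasDerivAt (fun w : ℝ => physHermite n ((w - b) / a))
      (2 * (n : ℝ) * physHermite (n - 1) ((x - b) / a) * (1 / a)) x :=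
  (hasDerivAt_physHermite n ((x - b) / a)).comp x (hasDerivAt_inner a b x)

/-- Step recurrence in `m`. -/
lemma Jstep (a b : ℝ) (n m : ℕ) :
    ∫ w : ℝ, physHermite (m + 1) w * physHermite n ((w - b) / a) * Real.exp (-w ^ 2)
      = (2 * (n : ℝ) / a) *
        ∫ w : ℝ, physHermite m w * physHermite (n - 1) ((w - b) / a) * Real.exp (-w ^ 2) := by
  set A := fun w : ℝ => physHermite (m + 1) w * physHermite n ((w - b) / a) * Real.exp (-w ^ 2)
    with hA
  set B := fun w : ℝ => physHermite m w * physHermite (n - 1) ((w - b) / a) * Real.exp (-w ^ 2)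
    with hB
  set g := fun w : ℝ => physHermite m w * Real.exp (-w ^ 2) * physHermite n ((w - b) / a) with hg
  have hd : ∀ x : ℝ, HasDerivAt g ((2 * (n : ℝ) / a) * B x - A x) x := by
    intro x
    have h := (hasDerivAt_HG m x).mul (hasDerivAt_Hcomp n a b x)
    refine h.congr_deriv ?_
    simp only [hA, hB]
    ring
  have hint : Integrable (fun x : ℝ => (2 * (n : ℝ) / a) * B x - A x) :=
    ((integrable_HH a b (n - 1) m).const_mul _).sub (integrable_HH a b n (m + 1))
  have ht : Tendsto g (cocompact ℝ) (nhds 0) := by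
    have := tendsto_PHH (physPoly m) a b n
    refine this.congr fun w => ?_
    simp only [hg, physPoly_eval]; ring
  have h0 := integral_deriv_zero g _ hd hint ht
  rw [integral_sub ((integrable_HH a b (n - 1) m).const_mul _) (integrable_HH a b n (m + 1)),
    integral_const_mul] at h0
  linarith

lemma hasDerivAt_gauss (x : ℝ) :
    HasDerivAt (fun y : ℝ => Real.exp (-y ^ 2)) (Real.exp (-x ^ 2) * (-(2 * x))) x := by
  have h1 : HasDerivAt (fun y : ℝ => -y ^ 2) (-(2 * x)) x := by
    exact ((hasDerivAt_pow 2 x).neg).congr_deriv (by norm_num)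
  exact h1.exp

lemma integrable_H1 (a b : ℝ) (n : ℕ) :
    Integrable fun w : ℝ => physHermite n ((w - b) / a) * Real.exp (-w ^ 2) := by
  simpa using integrable_PHH 1 a b n

lemma integrable_XH (a b : ℝ) (n : ℕ) :
    Integrable fun w : ℝ => (2 * w) * (physHermite n ((w - b) / a) * Real.exp (-w ^ 2)) := by
  exact (integrable_PHH (Polynomial.C 2 * Polynomial.X) a b n).congr
    (Filter.Eventually.of_forall fun w => by simp [mul_assoc])

/-- `∫ 2w·H_N((w-b)/a)·e^{-w²} = (2N/a)·∫ H_{N-1}((w-b)/a)·e^{-w²}` -/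
lemma key_mom (a b : ℝ) (N : ℕ) :
    ∫ w : ℝ, (2 * w) * (physHermite N ((w - b) / a) * Real.exp (-w ^ 2))
      = (2 * (N : ℝ) / a) * ∫ w : ℝ, physHermite (N - 1) ((w - b) / a) * Real.exp (-w ^ 2) := by
  set C := fun w : ℝ => physHermite (N - 1) ((w - b) / a) * Real.exp (-w ^ 2) with hC
  set D := fun w : ℝ => (2 * w) * (physHermite N ((w - b) / a) * Real.exp (-w ^ 2)) with hD
  set g := fun w : ℝ => physHermite N ((w - b) / a) * Real.exp (-w ^ 2) with hg
  have hd : ∀ x : ℝ, HasDerivAt g ((2 * (N : ℝ) / a) * C x - D x) x := by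
    intro x
    have h := (hasDerivAt_Hcomp N a b x).mul (hasDerivAt_gauss x)
    refine h.congr_deriv ?_
    simp only [hC, hD]
    ring
  have hint : Integrable (fun x : ℝ => (2 * (N : ℝ) / a) * C x - D x) :=
    ((integrable_H1 a b (N - 1)).const_mul _).sub (integrable_XH a b N)
  have ht : Tendsto g (cocompact ℝ) (nhds 0) := by
    have := tendsto_PHH 1 a b N
    refine this.congr fun w => ?_
    simp [hg]
  have h0 := integral_deriv_zero g _ hd hint ht
  rw [integral_sub ((integrable_H1 a b (N - 1)).const_mul _) (integrable_XH a b N),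
    integral_const_mul] at h0
  linarith

/-- Recurrence in `N` for `J0 N := ∫ H_N((w-b)/a)·e^{-w²}`. -/
lemma Jrec0 (a b : ℝ) (N : ℕ) :
    ∫ w : ℝ, physHermite (N + 2) ((w - b) / a) * Real.exp (-w ^ 2)
      = (-(2 * b) / a) * (∫ w : ℝ, physHermite (N + 1) ((w - b) / a) * Real.exp (-w ^ 2))
        + (2 * ((N : ℝ) + 1) * (1 / a ^ 2 - 1)) *
          ∫ w : ℝ, physHermite N ((w - b) / a) * Real.exp (-w ^ 2) := by
  have e1 : ∀ w : ℝ, physHermite (N + 2) ((w - b) / a) * Real.exp (-w ^ 2)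
      = (1 / a) * ((2 * w) * (physHermite (N + 1) ((w - b) / a) * Real.exp (-w ^ 2)))
        + ((-(2 * b) / a) * (physHermite (N + 1) ((w - b) / a) * Real.exp (-w ^ 2))
          + (-(2 * ((N : ℝ) + 1))) * (physHermite N ((w - b) / a) * Real.exp (-w ^ 2))) := by
    intro w
    rw [physHermite_succ (N + 1)]
    simp only [Nat.add_sub_cancel]
    push_cast
    ring
  have i1 : Integrable (fun w : ℝ =>
      (1 / a) * ((2 * w) * (physHermite (N + 1) ((w - b) / a) * Real.exp (-w ^ 2)))) :=
    (integrable_XH a b (N + 1)).const_mul _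
  have i2 : Integrable (fun w : ℝ =>
      (-(2 * b) / a) * (physHermite (N + 1) ((w - b) / a) * Real.exp (-w ^ 2))) :=
    (integrable_H1 a b (N + 1)).const_mul _
  have i3 : Integrable (fun w : ℝ =>
      (-(2 * ((N : ℝ) + 1))) * (physHermite N ((w - b) / a) * Real.exp (-w ^ 2))) :=
    (integrable_H1 a b N).const_mul _
  calc ∫ w : ℝ, physHermite (N + 2) ((w - b) / a) * Real.exp (-w ^ 2)
      = ∫ w : ℝ, ((1 / a) * ((2 * w) * (physHermite (N + 1) ((w - b) / a) * Real.exp (-w ^ 2)))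
        + ((-(2 * b) / a) * (physHermite (N + 1) ((w - b) / a) * Real.exp (-w ^ 2))
          + (-(2 * ((N : ℝ) + 1))) * (physHermite N ((w - b) / a) * Real.exp (-w ^ 2)))) :=
        integral_congr_ae (Filter.Eventually.of_forall e1)
    _ = (1 / a) * (∫ w : ℝ, (2 * w) * (physHermite (N + 1) ((w - b) / a) * Real.exp (-w ^ 2)))
        + ((-(2 * b) / a) * (∫ w : ℝ, physHermite (N + 1) ((w - b) / a) * Real.exp (-w ^ 2))
          + (-(2 * ((N : ℝ) + 1))) *
            ∫ w : ℝ, physHermite N ((w - b) / a) * Real.exp (-w ^ 2)) := by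
        have i23 : Integrable (fun w : ℝ =>
            (-(2 * b) / a) * (physHermite (N + 1) ((w - b) / a) * Real.exp (-w ^ 2))
              + (-(2 * ((N : ℝ) + 1))) * (physHermite N ((w - b) / a) * Real.exp (-w ^ 2))) :=
          i2.add i3
        rw [integral_add i1 i23, integral_add i2 i3, integral_const_mul, integral_const_mul,
          integral_const_mul]
    _ = _ := by
        rw [key_mom a b (N + 1)]
        simp only [Nat.add_sub_cancel]
        push_cast
        ring

lemma J0_base0 (a b : ℝ) :
    ∫ w : ℝ, physHermite 0 ((w - b) / a) * Real.exp (-w ^ 2) = Real.sqrt Real.pi := by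
  have h := integral_gaussian 1
  simp only [physHermite, one_mul]
  simpa using h

lemma int_x_gauss : ∫ w : ℝ, w * Real.exp (-w ^ 2) = 0 := by
  have hd : ∀ x : ℝ, HasDerivAt (fun y : ℝ => -Real.exp (-y ^ 2) / 2)
      (x * Real.exp (-x ^ 2)) x := by
    intro x
    have := (hasDerivAt_gauss x).neg.div_const 2
    refine this.congr_deriv ?_
    ring
  have hint : Integrable (fun x : ℝ => x * Real.exp (-x ^ 2)) := by
    have := integrable_mul_exp_neg_mul_sq (b := 1) one_pos
    simpa using this
  have ht : Tendsto (fun y : ℝ => -Real.exp (-y ^ 2) / 2) (cocompact ℝ) (nhds 0) := by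
    have := tendsto_poly_gauss (Polynomial.C (-(1:ℝ)/2))
    refine this.congr fun w => ?_
    simp; ring
  exact integral_deriv_zero _ _ hd hint ht

lemma J0_base1 (a b : ℝ) :
    ∫ w : ℝ, physHermite 1 ((w - b) / a) * Real.exp (-w ^ 2)
      = (-(2 * b) / a) * Real.sqrt Real.pi := by
  have e1 : ∀ w : ℝ, physHermite 1 ((w - b) / a) * Real.exp (-w ^ 2)
      = (2 / a) * (w * Real.exp (-w ^ 2)) + (-(2 * b) / a) * Real.exp (-w ^ 2) := by
    intro w; simp only [physHermite]; ring
  have i1 : Integrable (fun w : ℝ => (2 / a) * (w * Real.exp (-w ^ 2))) := by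
    have := integrable_mul_exp_neg_mul_sq (b := 1) one_pos
    exact (by simpa using this : Integrable fun w : ℝ => w * Real.exp (-w ^ 2)).const_mul _
  have i2 : Integrable (fun w : ℝ => (-(2 * b) / a) * Real.exp (-w ^ 2)) := by
    have := integrable_exp_neg_mul_sq (b := 1) one_pos
    exact (by simpa using this : Integrable fun w : ℝ => Real.exp (-w ^ 2)).const_mul _
  rw [integral_congr_ae (Filter.Eventually.of_forall e1), integral_add i1 i2,
    integral_const_mul, integral_const_mul, int_x_gauss]
  have h := integral_gaussian 1
  simp only [neg_mul, one_mul] at h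
  rw [show (∫ w : ℝ, Real.exp (-w ^ 2)) = Real.sqrt Real.pi by simpa using h]
  ring

noncomputable def Ssum (x y : ℝ) (N : ℕ) : ℝ :=
  ∑ i ∈ Finset.range (N / 2 + 1),
    (((N - 2 * i).factorial : ℝ) * (i.factorial : ℝ))⁻¹ * x ^ (N - 2 * i) * y ^ i

lemma Srec (x y : ℝ) (N : ℕ) :
    ((N : ℝ) + 2) * Ssum x y (N + 2) = x * Ssum x y (N + 1) + 2 * y * Ssum x y N := by
  have hrange : (N + 2) / 2 + 1 = N / 2 + 2 := by omega
  set t : ℕ → ℝ := fun i =>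
    (((N + 2 - 2 * i).factorial : ℝ) * (i.factorial : ℝ))⁻¹ * x ^ (N + 2 - 2 * i) * y ^ i with ht
  have hL : ((N : ℝ) + 2) * Ssum x y (N + 2)
      = (∑ i ∈ Finset.range (N / 2 + 2), ((N + 2 - 2 * i : ℕ) : ℝ) * t i)
        + ∑ i ∈ Finset.range (N / 2 + 2), (2 * (i : ℝ)) * t i := by
    rw [Ssum, hrange, Finset.mul_sum, ← Finset.sum_add_distrib]
    refine Finset.sum_congr rfl fun i hi => ?_
    have h2i : 2 * i ≤ N + 2 := by
      have := Finset.mem_range.mp hi; omega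
    have hc : ((N + 2 - 2 * i : ℕ) : ℝ) = (N : ℝ) + 2 - 2 * i := by
      push_cast [Nat.cast_sub h2i]; ring
    rw [hc]; ring
  -- B part
  have hB : (∑ i ∈ Finset.range (N / 2 + 2), (2 * (i : ℝ)) * t i) = 2 * y * Ssum x y N := by
    rw [Finset.sum_range_succ' (fun i => (2 * (i : ℝ)) * t i) (N / 2 + 1)]
    simp only [Nat.cast_zero, mul_zero, zero_mul, add_zero]
    rw [Ssum, Finset.mul_sum]
    refine Finset.sum_congr rfl fun i hi => ?_
    have hNi : N + 2 - 2 * (i + 1) = N - 2 * i := by omega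
    simp only [ht, hNi, Nat.factorial_succ]
    have h1 : ((i : ℝ) + 1) ≠ 0 := by positivity
    have h2 : ((N - 2 * i).factorial : ℝ) ≠ 0 := by
      exact_mod_cast Nat.factorial_ne_zero _
    have h3 : ((i).factorial : ℝ) ≠ 0 := by exact_mod_cast Nat.factorial_ne_zero _
    push_cast
    field_simp
    ring
  -- A part
  have hA : (∑ i ∈ Finset.range (N / 2 + 2), ((N + 2 - 2 * i : ℕ) : ℝ) * t i)
      = x * Ssum x y (N + 1) := by
    rw [Ssum, Finset.mul_sum]
    rw [← Finset.sum_subset (Finset.range_subset_range.mpr (show (N + 1) / 2 + 1 ≤ N / 2 + 2 by omega))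
      (fun i hi hni => ?_)]
    · refine Finset.sum_congr rfl fun i hi => ?_
      have h2i : 2 * i ≤ N + 1 := by
        have := Finset.mem_range.mp hi
        omega
      have hNi : N + 2 - 2 * i = (N + 1 - 2 * i) + 1 := by omega
      simp only [ht, hNi, Nat.factorial_succ, pow_succ]
      generalize (N + 1 - 2 * i) = k
      have h1 : ((k : ℕ) : ℝ) + 1 ≠ 0 := by positivity
      have h2 : ((k : ℕ).factorial : ℝ) ≠ 0 := by
        exact_mod_cast Nat.factorial_ne_zero _
      have h3 : ((i).factorial : ℝ) ≠ 0 := by exact_mod_cast Nat.factorial_ne_zero _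
      push_cast
      field_simp
    · have hi' := Finset.mem_range.mp hi
      have : N + 2 - 2 * i = 0 := by
        simp only [Finset.mem_range, not_lt] at hni
        omega
      rw [this]
      simp
  rw [hL, hA, hB]

lemma J0_explicit (a b : ℝ) : ∀ N : ℕ,
    ∫ w : ℝ, physHermite N ((w - b) / a) * Real.exp (-w ^ 2)
      = Real.sqrt Real.pi * (N.factorial : ℝ) * Ssum (-(2 * b) / a) (1 / a ^ 2 - 1) N
  | 0 => by rw [J0_base0]; simp [Ssum]
  | 1 => by rw [J0_base1]; simp [Ssum]; ring
  | (N + 2) => by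
      rw [Jrec0 a b N, J0_explicit a b (N + 1), J0_explicit a b N]
      have hS := Srec (-(2 * b) / a) (1 / a ^ 2 - 1) N
      have hfact : (((N + 2).factorial : ℕ) : ℝ)
          = ((N : ℝ) + 2) * (((N + 1).factorial : ℕ) : ℝ) := by
        rw [Nat.factorial_succ]; push_cast; ring
      have hfact2 : (((N + 1).factorial : ℕ) : ℝ) = ((N : ℝ) + 1) * ((N.factorial : ℕ) : ℝ) := by
        rw [Nat.factorial_succ]; push_cast; ring
      rw [hfact, hfact2]
      linear_combination (-(Real.sqrt Real.pi * (((N : ℝ) + 1) * ((N.factorial : ℕ) : ℝ)))) * hS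

lemma Jm (a b : ℝ) : ∀ (m n : ℕ), m ≤ n →
    ∫ w : ℝ, physHermite m w * physHermite n ((w - b) / a) * Real.exp (-w ^ 2)
      = (2 / a) ^ m * ((n.factorial : ℝ) / ((n - m).factorial : ℝ)) *
        ∫ w : ℝ, physHermite (n - m) ((w - b) / a) * Real.exp (-w ^ 2)
  | 0, n, _ => by
      have hne : ((n.factorial : ℕ) : ℝ) ≠ 0 := by exact_mod_cast Nat.factorial_ne_zero n
      simp [physHermite, div_self hne]
  | (m + 1), n, h => by
      cases n with
      | zero => omega
      | succ n' =>
          rw [Jstep a b (n' + 1) m]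
          simp only [Nat.add_sub_cancel, Nat.succ_sub_succ, Nat.sub_zero]
          rw [Jm a b m n' (by omega)]
          have hfact : (((n' + 1).factorial : ℕ) : ℝ)
              = ((n' : ℝ) + 1) * ((n'.factorial : ℕ) : ℝ) := by
            rw [Nat.factorial_succ]; push_cast; ring
          rw [hfact, pow_succ]
          push_cast
          ring

lemma sum_reindex (x y : ℝ) (n m : ℕ) (h : m ≤ n) :
    ∑ k ∈ (Finset.Icc m n).filter (fun k => Even (k - m)),
        (((n - k).factorial : ℝ) * (((k - m) / 2).factorial : ℝ))⁻¹ * x ^ (n - k)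
          * y ^ ((k - m) / 2)
      = Ssum x y (n - m) := by
  rw [Ssum]
  refine Finset.sum_nbij' (fun k => (k - m) / 2) (fun i => m + 2 * i) ?_ ?_ ?_ ?_ ?_
  · intro k hk
    simp only [Finset.mem_filter, Finset.mem_Icc, Nat.even_iff] at hk
    simp only [Finset.mem_range]
    omega
  · intro i hi
    simp only [Finset.mem_range] at hi
    simp only [Finset.mem_filter, Finset.mem_Icc, Nat.even_iff]
    omega
  · intro k hk
    simp only [Finset.mem_filter, Finset.mem_Icc, Nat.even_iff] at hk
    show m + 2 * ((k - m) / 2) = k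
    omega
  · intro i hi
    simp only [Finset.mem_range] at hi
    show (m + 2 * i - m) / 2 = i
    omega
  · intro k hk
    simp only [Finset.mem_filter, Finset.mem_Icc, Nat.even_iff] at hk
    have h1 : n - m - 2 * ((k - m) / 2) = n - k := by omega
    rw [h1]

lemma sqrt_pow_two (k : ℕ) : Real.sqrt ((2:ℝ)^k) = (2:ℝ) ^ ((k:ℝ)/2) := by
  rw [Real.sqrt_eq_rpow, ← Real.rpow_natCast 2 k, ← Real.rpow_mul (by norm_num)]
  congr 1
  ring

lemma rpow_diff_half (n m : ℕ) :
    (2:ℝ) ^ (((m:ℝ) - (n:ℝ))/2) = Real.sqrt ((2:ℝ)^m) / Real.sqrt ((2:ℝ)^n) := by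
  rw [sqrt_pow_two, sqrt_pow_two, ← Real.rpow_sub two_pos]
  congr 1
  ring

lemma final_scalar (a α α' : ℝ) (ha0 : a ≠ 0) (hα : 0 < α) (hα' : 0 < α')
    (haa : a = α / α') (n m : ℕ) (h : m ≤ n) (S : ℝ) :
    (Real.sqrt (Real.pi * 2 ^ m * (m.factorial : ℝ)))⁻¹ *
      (Real.sqrt (Real.pi * 2 ^ n * (n.factorial : ℝ)))⁻¹ * Real.sqrt Real.pi * α⁻¹ *
        (α' * ((2 / a) ^ m * ((n.factorial : ℝ) / ((n - m).factorial : ℝ)) *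
          (Real.sqrt Real.pi * ((n - m).factorial : ℝ) * S)))
      = Kcoef n m * (a ^ (m + 1))⁻¹ * S := by
  have hαe : α = a * α' := by rw [haa]; field_simp
  have hsm : Real.sqrt (Real.pi * 2 ^ m * (m.factorial : ℝ))
      = Real.sqrt Real.pi * Real.sqrt ((2:ℝ)^m) * Real.sqrt (m.factorial : ℝ) := by
    rw [Real.sqrt_mul (by positivity), Real.sqrt_mul (by positivity)]
  have hsn : Real.sqrt (Real.pi * 2 ^ n * (n.factorial : ℝ))
      = Real.sqrt Real.pi * Real.sqrt ((2:ℝ)^n) * Real.sqrt (n.factorial : ℝ) := by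
    rw [Real.sqrt_mul (by positivity), Real.sqrt_mul (by positivity)]
  have h2m : Real.sqrt ((2:ℝ)^m) * Real.sqrt ((2:ℝ)^m) = (2:ℝ)^m :=
    Real.mul_self_sqrt (by positivity)
  have hnn : Real.sqrt ((n.factorial : ℝ)) * Real.sqrt ((n.factorial : ℝ))
      = (n.factorial : ℝ) := Real.mul_self_sqrt (by positivity)
  have hπ : Real.sqrt Real.pi ≠ 0 := by positivity
  have hm2 : Real.sqrt ((2:ℝ)^m) ≠ 0 := by positivity
  have hn2 : Real.sqrt ((2:ℝ)^n) ≠ 0 := by positivity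
  have hmf : Real.sqrt ((m.factorial : ℝ)) ≠ 0 := by
    have : (0:ℝ) < (m.factorial : ℝ) := by exact_mod_cast Nat.factorial_pos m
    positivity
  have hnf : Real.sqrt ((n.factorial : ℝ)) ≠ 0 := by
    have : (0:ℝ) < (n.factorial : ℝ) := by exact_mod_cast Nat.factorial_pos n
    positivity
  have hnmf : ((n - m).factorial : ℝ) ≠ 0 := by exact_mod_cast Nat.factorial_ne_zero _
  have hα'0 : α' ≠ 0 := ne_of_gt hα'
  rw [Kcoef, hsm, hsn, hαe, rpow_diff_half, div_pow]
  field_simp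
  linear_combination (-(((n.factorial : ℝ)) * (S * a ^ (m + 1)))) * h2m
    + (-(Real.sqrt ((2:ℝ)^m) * Real.sqrt ((2:ℝ)^m) * (S * a ^ (m + 1)))) * hnn

/-- Explicit formula for the transformation matrix, general case
(`α ≠ α'` and `u ≠ u'`). -/
theorem transferMatrix_general_case (α' α u' u : ℝ) (hα' : 0 < α') (hα : 0 < α)
    (hαne : α ≠ α') (hune : u ≠ u') (a b : ℝ) (ha : a = α / α') (hb : b = (u - u') / α')
    (n m : ℕ) (hnm : m ≤ n) :
    transferMatrix α' u' α u n m
      = Kcoef n m * (a ^ (m + 1))⁻¹ *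
        ∑ k ∈ (Finset.Icc m n).filter (fun k => Even (k - m)),
          (((n - k).factorial : ℝ) * (((k - m) / 2).factorial : ℝ))⁻¹ *
            (-(2 * b) / a) ^ (n - k) * (1 / a ^ 2 - 1) ^ ((k - m) / 2) := by
  have hα0 : α ≠ 0 := ne_of_gt hα
  have hα'0 : α' ≠ 0 := ne_of_gt hα'
  have ha0 : a ≠ 0 := by rw [ha]; exact div_ne_zero hα0 hα'0
  set F : ℝ → ℝ := fun v => physHermite m ((v - u') / α') * physHermite n ((v - u) / α) *
      Real.exp (-((v - u') / α') ^ 2) with hF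
  set Cst : ℝ := (Real.sqrt (Real.pi * 2 ^ m * (m.factorial : ℝ)))⁻¹ *
      (Real.sqrt (Real.pi * 2 ^ n * (n.factorial : ℝ)))⁻¹ * Real.sqrt Real.pi * α⁻¹ with hCst
  have e1 : ∀ v, awHermite α' u' m v * awHermite α u n v * hermiteWeight α u v = Cst * F v := by
    intro v
    have hexp : Real.exp (-((v - u) / α) ^ 2) * Real.exp (((v - u) / α) ^ 2) = 1 := by
      rw [← Real.exp_add]; simp
    calc awHermite α' u' m v * awHermite α u n v * hermiteWeight α u v
        = (Cst * F v) * (Real.exp (-((v - u) / α) ^ 2) * Real.exp (((v - u) / α) ^ 2)) := by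
          simp only [awHermite, hermiteWeight, hCst, hF]; ring
      _ = Cst * F v := by rw [hexp, mul_one]
  have step1 : transferMatrix α' u' α u n m = Cst * ∫ v, F v := by
    rw [transferMatrix, integral_congr_ae (Filter.Eventually.of_forall e1), integral_const_mul]
  have hcomp : ∀ w : ℝ, F (α' * w + u')
      = physHermite m w * physHermite n ((w - b) / a) * Real.exp (-w ^ 2) := by
    intro w
    have h1 : (α' * w + u' - u') / α' = w := by field_simp; ring
    have h2 : (α' * w + u' - u) / α = (w - b) / a := by
      rw [ha, hb]; field_simp; ring
    rw [hF]; simp only; rw [h1, h2]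
  have step2 : (∫ v, F v)
      = α' * ∫ w : ℝ, physHermite m w * physHermite n ((w - b) / a) * Real.exp (-w ^ 2) := by
    have h3 : (∫ w : ℝ, F (α' * w + u')) = |α'⁻¹| • ∫ x, F (x + u') :=
      Measure.integral_comp_mul_left (fun x => F (x + u')) α'
    rw [integral_add_right_eq_self F u'] at h3
    rw [← integral_congr_ae (Filter.Eventually.of_forall hcomp), h3,
      abs_of_pos (inv_pos.mpr hα'), smul_eq_mul]
    field_simp
  rw [step1, step2, Jm a b m n hnm, J0_explicit a b (n - m),
    ← sum_reindex (-(2 * b) / a) (1 / a ^ 2 - 1) n m hnm]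
  exact final_scalar a α α' ha0 hα hα' ha n m hnm _
end

section
/- The transformation matrix is lower triangular: For all α', α > 0 and u', u ∈ ℝ, and all n, m ∈ ℕ with n < m, ℙ_{n,m} = 0. -/
open MeasureTheory Real Finset

open Polynomial

/-- Polynomial version of the physicists' Hermite polynomials. -/
noncomputable def PH : ℕ → Polynomial ℝ
  | 0 => 1
  | 1 => C 2 * X
  | (n + 2) => C 2 * X * PH (n + 1) - C (2 * ((n : ℝ) + 1)) * PH n

lemma PH_zero : PH 0 = 1 := rfl
lemma PH_one : PH 1 = C 2 * X := rfl
lemma PH_add_two (n : ℕ) :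
    PH (n + 2) = C 2 * X * PH (n + 1) - C (2 * ((n : ℝ) + 1)) * PH n := rfl

lemma PH_natDegree_le : ∀ n : ℕ, (PH n).natDegree ≤ n := by
  intro n
  induction n using Nat.twoStepInduction with
  | zero => simp [PH_zero]
  | one => simpa [PH_one] using natDegree_mul_le.trans (by simp [natDegree_X_le])
  | more n ih1 ih2 =>
    rw [PH_add_two]
    refine (natDegree_sub_le _ _).trans (max_le ?_ ?_)
    · refine natDegree_mul_le.trans ?_
      have : (C (2:ℝ) * X).natDegree ≤ 1 := natDegree_mul_le.trans (by simp [natDegree_X_le])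
      omega
    · refine natDegree_mul_le.trans ?_
      simp only [natDegree_C, zero_add]
      omega

lemma PH_eval : ∀ (n : ℕ) (x : ℝ), (PH n).eval x = physHermite n x := by
  intro n
  induction n using Nat.twoStepInduction with
  | zero => intro x; simp [PH_zero, physHermite]
  | one => intro x; simp [PH_one, physHermite]
  | more n ih1 ih2 =>
    intro x
    simp [PH_add_two, physHermite, ih1, ih2]

lemma PH_deriv_eval : ∀ (n : ℕ) (x : ℝ),
    (derivative (PH (n + 1))).eval x = 2 * ((n : ℝ) + 1) * (PH n).eval x := by
  intro n
  induction n using Nat.twoStepInduction with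
  | zero => intro x; simp [PH_one, PH_zero]
  | one => intro x; simp [PH_add_two, PH_one, PH_zero]; ring
  | more n ih1 ih2 =>
    intro x
    rw [show n + 2 + 1 = (n + 1) + 2 from rfl, PH_add_two (n + 1)]
    simp only [derivative_sub, derivative_mul, derivative_C, derivative_X, eval_sub, eval_mul,
      eval_add, eval_C, eval_X, zero_mul, zero_add, mul_one, add_zero, zero_sub, mul_zero]
    rw [ih2 x, ih1 x]
    rw [PH_add_two n]
    push_cast
    simp only [eval_sub, eval_mul, eval_C, eval_X]
    ring

lemma PH_step_eval (n : ℕ) (x : ℝ) :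
    (PH (n + 1)).eval x = 2 * x * (PH n).eval x - (derivative (PH n)).eval x := by
  cases n with
  | zero => simp [PH_one, PH_zero]
  | succ n =>
    rw [PH_add_two n, PH_deriv_eval n x]
    push_cast
    simp only [eval_sub, eval_mul, eval_C, eval_X]

lemma integrable_pow_gaussian (n : ℕ) :
    Integrable (fun x : ℝ => x ^ n * Real.exp (-x ^ 2)) := by
  have h := integrable_rpow_mul_exp_neg_mul_sq (b := 1) one_pos
    (s := (n : ℝ)) (by exact_mod_cast neg_one_lt_zero.trans_le n.cast_nonneg)
  refine h.congr (Filter.Eventually.of_forall fun x => ?_)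
  simp only [Real.rpow_natCast, neg_one_mul]

lemma integrable_poly_gaussian (p : Polynomial ℝ) :
    Integrable (fun x : ℝ => p.eval x * Real.exp (-x ^ 2)) := by
  induction p using Polynomial.induction_on' with
  | add p q hp hq =>
    refine (hp.add hq).congr (Filter.Eventually.of_forall fun x => ?_)
    simp [add_mul]
  | monomial n a =>
    refine ((integrable_pow_gaussian n).const_mul a).congr
      (Filter.Eventually.of_forall fun x => ?_)
    simp [Polynomial.eval_monomial, mul_assoc]

/-- The Hermite–Gaussian function `H_n(x) e^{-x²}`. -/
noncomputable def gg (n : ℕ) (x : ℝ) : ℝ := (PH n).eval x * Real.exp (-x ^ 2)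

lemma hasDerivAt_gg (n : ℕ) (x : ℝ) : HasDerivAt (gg n) (-(gg (n + 1) x)) x := by
  have h1 : HasDerivAt (fun y : ℝ => (PH n).eval y) ((derivative (PH n)).eval x) x :=
    (PH n).hasDerivAt x
  have h0 : HasDerivAt (fun y : ℝ => -y ^ 2) (-(2 * x)) x := by
    simpa using (hasDerivAt_pow 2 x).fun_neg
  have h2 : HasDerivAt (fun y : ℝ => Real.exp (-y ^ 2))
      (Real.exp (-x ^ 2) * -(2 * x)) x := h0.exp
  have : HasDerivAt (gg n) _ x := h1.mul h2
  convert this using 1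
  rw [gg, PH_step_eval n x]
  ring

/-- `H_m(x) e^{-x²}` is orthogonal to every polynomial of degree less than `m`. -/
lemma ortho : ∀ (m : ℕ) (p : Polynomial ℝ), p.natDegree < m →
    ∫ x : ℝ, p.eval x * gg m x = 0 := by
  intro m
  induction m with
  | zero => exact fun p hp => absurd hp (Nat.not_lt_zero _)
  | succ m ih =>
    intro p hp
    have I1 : Integrable ((fun x => p.eval x) * fun x => -(gg (m + 1) x)) := by
      refine (integrable_poly_gaussian (p * PH (m + 1))).neg.congr
        (Filter.Eventually.of_forall fun x => ?_)
      simp [gg]; ring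
    have I2 : Integrable ((fun x => (derivative p).eval x) * fun x => gg m x) := by
      refine (integrable_poly_gaussian (derivative p * PH m)).congr
        (Filter.Eventually.of_forall fun x => ?_)
      simp [gg]; ring
    have I3 : Integrable ((fun x => p.eval x) * fun x => gg m x) := by
      refine (integrable_poly_gaussian (p * PH m)).congr
        (Filter.Eventually.of_forall fun x => ?_)
      simp [gg]; ring
    have key : ∫ x : ℝ, p.eval x * -(gg (m + 1) x)
        = - ∫ x : ℝ, (derivative p).eval x * gg m x :=
      integral_mul_deriv_eq_deriv_mul_of_integrable
        (fun x _ => p.hasDerivAt x) (fun x _ => hasDerivAt_gg m x) I1 I2 I3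
    have key2 : ∫ x : ℝ, p.eval x * gg (m + 1) x
        = ∫ x : ℝ, (derivative p).eval x * gg m x := by
      have := key
      rw [integral_congr_ae (g := fun x => -(p.eval x * gg (m + 1) x))
        (Filter.Eventually.of_forall fun x => by ring), integral_neg] at this
      linarith
    rw [key2]
    by_cases hd : derivative p = 0
    · simp [hd]
    · refine ih _ ?_
      have h1 : p.natDegree ≠ 0 := by
        intro h0
        obtain ⟨a, rfl⟩ := Polynomial.natDegree_eq_zero.mp h0
        simp at hd
      exact lt_of_lt_of_le (Polynomial.natDegree_derivative_lt h1) (Nat.lt_succ_iff.mp hp)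

/-- The transformation matrix is lower triangular. -/
theorem transferMatrix_lower_triangular (α' α u' u : ℝ) (hα' : 0 < α') (hα : 0 < α)
    (n m : ℕ) (hnm : n < m) :
    transferMatrix α' u' α u n m = 0 := by
  have hα'0 : α' ≠ 0 := hα'.ne'
  have hα0 : α ≠ 0 := hα.ne'
  set q : Polynomial ℝ := (PH n).comp (C (α' / α) * X + C ((u' - u) / α)) with hq
  set K : ℝ := (Real.sqrt (Real.pi * 2 ^ m * (m.factorial : ℝ)))⁻¹ *
    ((Real.sqrt (Real.pi * 2 ^ n * (n.factorial : ℝ)))⁻¹ * (Real.sqrt Real.pi * α⁻¹)) with hK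
  have hfun : ∀ v : ℝ, awHermite α' u' m v * awHermite α u n v * hermiteWeight α u v
      = (fun y => K * (q.eval y * gg m y)) ((v - u') / α') := by
    intro v
    have harg : (α' / α) * ((v - u') / α') + (u' - u) / α = (v - u) / α := by
      field_simp
      ring
    have hcancel : Real.exp (-((v - u) / α) ^ 2) * Real.exp (((v - u) / α) ^ 2) = 1 := by
      rw [← Real.exp_add]
      simp
    simp only [awHermite, hermiteWeight, gg, hq, hK, Polynomial.eval_comp, eval_add, eval_mul,
      eval_C, eval_X, harg, PH_eval]
    linear_combination ((Real.sqrt (Real.pi * 2 ^ m * (m.factorial : ℝ)))⁻¹ *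
      physHermite m ((v - u') / α') * Real.exp (-((v - u') / α') ^ 2) *
      (Real.sqrt (Real.pi * 2 ^ n * (n.factorial : ℝ)))⁻¹ * physHermite n ((v - u) / α) *
      Real.sqrt Real.pi * α⁻¹) * hcancel
  have h1 : transferMatrix α' u' α u n m
      = ∫ v : ℝ, (fun y => K * (q.eval y * gg m y)) ((v - u') / α') := by
    unfold transferMatrix
    exact integral_congr_ae (Filter.Eventually.of_forall hfun)
  have h2 : (∫ v : ℝ, (fun y => K * (q.eval y * gg m y)) ((v - u') / α'))
      = ∫ w : ℝ, (fun y => K * (q.eval y * gg m y)) (w / α') :=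
    integral_sub_right_eq_self (μ := volume)
      (fun w : ℝ => (fun y => K * (q.eval y * gg m y)) (w / α')) u'
  have h3 : (∫ w : ℝ, (fun y => K * (q.eval y * gg m y)) (w / α'))
      = |α'| • ∫ y : ℝ, K * (q.eval y * gg m y) :=
    Measure.integral_comp_div (fun y => K * (q.eval y * gg m y)) α'
  have hdeg : q.natDegree < m := by
    have hlin : (C (α' / α) * X + C ((u' - u) / α)).natDegree ≤ 1 := by
      refine (natDegree_add_le _ _).trans (max_le ?_ ?_)
      · exact natDegree_mul_le.trans (by simp [natDegree_X_le])
      · simp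
    calc q.natDegree ≤ (PH n).natDegree * (C (α' / α) * X + C ((u' - u) / α)).natDegree :=
          natDegree_comp_le
      _ ≤ n * 1 := Nat.mul_le_mul (PH_natDegree_le n) hlin
      _ = n := Nat.mul_one n
      _ < m := hnm
  have h4 : ∫ y : ℝ, q.eval y * gg m y = 0 := ortho m q hdeg
  rw [h1, h2, h3, integral_const_mul, h4, mul_zero, smul_zero]
end
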